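/- There exists a complete bounded lattice L of cardinality ℵ_ω such that for every n ∈ ℕ, L contains a chain of cardinality ℵ_n, yet every chain in L has cardinality strictly less than ℵ_ω, every antichain in L is at most countable, and there are 2^{ℵ_ω} many monotone functions from L to L. -/

import Mathlib

open Cardinal

namespace AlephOmegaLattice

open Set Ordinal

noncomputable section

abbrev O (n : ℕ) : Type := (Cardinal.aleph n).ord.ToType

instance (n : ℕ) : Nonempty (O n) := by
  rw [Ordinal.nonempty_toType_iff]
  exact (Cardinal.lt_ord.2 (by simpa using (Cardinal.aleph_pos (n : Ordinal)))).ne'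

abbrev B : Type := Σ n : ℕ, O n

/-- The down-set of `p` inside its own block. -/
def D (p : B) : Set B := Sigma.mk p.1 '' Set.Iic p.2

lemma self_mem_D (p : B) : p ∈ D p := ⟨p.2, Set.self_mem_Iic, rfl⟩

lemma fst_eq_of_mem {p q : B} (h : q ∈ D p) : q.1 = p.1 := by
  obtain ⟨c, -, rfl⟩ := h; rfl

lemma mem_D_iff {n : ℕ} {a b : O n} : (⟨n, b⟩ : B) ∈ D ⟨n, a⟩ ↔ b ≤ a := by
  constructor
  · rintro ⟨c, hc, hceq⟩
    obtain ⟨-, h2⟩ := Sigma.mk.inj_iff.1 hceq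
    exact (eq_of_heq h2) ▸ Set.mem_Iic.1 hc
  · exact fun h => ⟨b, Set.mem_Iic.2 h, rfl⟩

lemma D_subset_D {n : ℕ} {a b : O n} : D ⟨n, a⟩ ⊆ D ⟨n, b⟩ ↔ a ≤ b := by
  constructor
  · intro h
    exact mem_D_iff.1 (h (self_mem_D ⟨n, a⟩))
  · rintro h _ ⟨c, hc, rfl⟩
    exact ⟨c, Set.mem_Iic.2 ((Set.mem_Iic.1 hc).trans h), rfl⟩

lemma sigma_snd {n : ℕ} {a b : O n} (h : (⟨n, a⟩ : B) = ⟨n, b⟩) : a = b :=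
  eq_of_heq (Sigma.mk.inj_iff.1 h).2

lemma D_inj : Function.Injective D := by
  rintro ⟨n, a⟩ ⟨m, b⟩ h
  have h1 : (⟨n, a⟩ : B) ∈ D ⟨m, b⟩ := h ▸ self_mem_D _
  have h2 : (⟨m, b⟩ : B) ∈ D ⟨n, a⟩ := h.symm ▸ self_mem_D _
  have hfst : m = n := fst_eq_of_mem h2
  subst hfst
  rw [mem_D_iff] at h1 h2
  rw [le_antisymm h1 h2]

lemma D_ne_empty (p : B) : D p ≠ ∅ := fun h => (h ▸ self_mem_D p : p ∈ (∅ : Set B))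

lemma D_ne_univ (p : B) : D p ≠ Set.univ := by
  intro h
  obtain ⟨b⟩ : Nonempty (O (p.1 + 1)) := inferInstance
  have : (⟨p.1 + 1, b⟩ : B) ∈ D p := h ▸ Set.mem_univ _
  exact Nat.succ_ne_self p.1 (fst_eq_of_mem this)

lemma D_inter_eq_empty {p q : B} (h : p.1 ≠ q.1) : D p ∩ D q = ∅ := by
  ext r
  simp only [Set.mem_inter_iff, Set.mem_empty_iff_false, iff_false, not_and]
  intro h1 h2
  exact h ((fst_eq_of_mem h1).symm.trans (fst_eq_of_mem h2))

/-- The carrier of our lattice, as a family of subsets of `B`. -/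
def LS : Set (Set B) := {X | X = ∅ ∨ X = Set.univ ∨ ∃ p, X = D p}

lemma empty_mem : (∅ : Set B) ∈ LS := Or.inl rfl
lemma univ_mem : (Set.univ : Set B) ∈ LS := Or.inr (Or.inl rfl)
lemma D_mem (p : B) : D p ∈ LS := Or.inr (Or.inr ⟨p, rfl⟩)

lemma sInfClosed (S : Set (Set B)) (h : S ⊆ LS) : sInf S ∈ LS := by
  by_cases h0 : ∅ ∈ S
  · have : sInf S = ∅ := le_antisymm (sInf_le h0) bot_le
    rw [this]; exact empty_mem
  by_cases hD : ∃ p : B, D p ∈ S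
  · obtain ⟨⟨n, a⟩, ha⟩ := hD
    by_cases h2 : ∃ q : B, D q ∈ S ∧ q.1 ≠ n
    · obtain ⟨q, hq, hne⟩ := h2
      have : sInf S = ∅ := by
        refine le_antisymm ?_ bot_le
        refine le_trans (le_inf (sInf_le ha) (sInf_le hq)) ?_
        rw [← D_inter_eq_empty (p := ⟨n, a⟩) (q := q) (fun hh => hne hh.symm)]
        exact le_rfl
      rw [this]; exact empty_mem
    · push_neg at h2
      set A : Set (O n) := {b | D ⟨n, b⟩ ∈ S} with hA
      have hAne : A.Nonempty := ⟨a, ha⟩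
      obtain ⟨m, hmA, hmin⟩ := (wellFounded_lt (α := O n)).has_min A hAne
      have : sInf S = D ⟨n, m⟩ := by
        refine le_antisymm (sInf_le hmA) (le_sInf ?_)
        intro x hx
        rcases h hx with rfl | rfl | ⟨q, rfl⟩
        · exact absurd hx h0
        · exact le_top
        · have hq1 : q.1 = n := h2 q hx
          obtain ⟨n', b⟩ := q
          dsimp at hq1; subst hq1
          exact D_subset_D.2 (le_of_not_gt (hmin b hx))
      rw [this]; exact D_mem _
  · have : sInf S = Set.univ := by
      rw [← Set.top_eq_univ]
      rw [sInf_eq_top]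
      intro x hx
      rcases h hx with rfl | rfl | ⟨q, rfl⟩
      · exact absurd hx h0
      · rfl
      · exact absurd hx (fun hh => hD ⟨q, hh⟩)
    rw [this]; exact univ_mem

instance : InfSet ↥LS := ⟨fun S => ⟨sInf ((↑) '' S), sInfClosed _ (by rintro _ ⟨x, -, rfl⟩; exact x.2)⟩⟩

instance instL : CompleteLattice ↥LS :=
  completeLatticeOfInf _ (fun S => by
    constructor
    · intro x hx
      show sInf ((↑) '' S) ≤ x.val
      exact sInf_le (Set.mem_image_of_mem _ hx)
    · intro b hb
      show b.val ≤ sInf ((↑) '' S)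
      refine le_sInf ?_
      rintro _ ⟨x, hx, rfl⟩
      exact hb hx)

lemma le_def {x y : ↥LS} : x ≤ y ↔ x.val ⊆ y.val := Iff.rfl

def el (p : B) : ↥LS := ⟨D p, D_mem p⟩

lemma mk_O (n : ℕ) : #(O n) = Cardinal.aleph n := by
  rw [Cardinal.mk_toType, Cardinal.card_ord]

lemma sum_aleph : ((Cardinal.sum fun n : ℕ => Cardinal.aleph n : Cardinal.{0})) = Cardinal.aleph Ordinal.omega0 := by
  apply le_antisymm
  · refine le_trans (Cardinal.sum_le_sum _ _
      (fun n => Cardinal.aleph_le_aleph.2 (Ordinal.nat_lt_omega0 n).le)) (le_of_eq ?_)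
    refine (Cardinal.sum_const' _ _).trans ?_
    rw [Cardinal.mk_nat]
    exact Cardinal.mul_eq_right (Cardinal.aleph0_le_aleph _)
      (Cardinal.aleph0_le_aleph _) Cardinal.aleph0_ne_zero
  · rw [Cardinal.aleph_limit Ordinal.isSuccLimit_omega0]
    refine ciSup_le' ?_
    rintro ⟨o, ho⟩
    obtain ⟨n, rfl⟩ := Ordinal.lt_omega0.1 ho
    exact Cardinal.le_sum (fun n : ℕ => Cardinal.aleph n) n

lemma mk_B : #B = Cardinal.aleph Ordinal.omega0 := by
  rw [Cardinal.mk_sigma]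
  simp only [mk_O]
  exact sum_aleph

lemma el_inj : Function.Injective el := fun p q h => D_inj (congrArg Subtype.val h)

lemma mk_L : #(↥LS) = Cardinal.aleph Ordinal.omega0 := by
  apply le_antisymm
  · classical
    have hsub : LS ⊆ Set.range (fun x : Option (Option B) =>
        x.elim (∅ : Set B) (fun y => y.elim Set.univ D)) := by
      rintro X (rfl | rfl | ⟨p, rfl⟩)
      · exact ⟨none, rfl⟩
      · exact ⟨some none, rfl⟩
      · exact ⟨some (some p), rfl⟩
    calc #(↥LS) ≤ #(↥(Set.range _)) := Cardinal.mk_le_mk_of_subset hsub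
      _ ≤ #(Option (Option B)) := Cardinal.mk_range_le
      _ = Cardinal.aleph Ordinal.omega0 := by
          rw [Cardinal.mk_option, Cardinal.mk_option, mk_B,
            Cardinal.add_one_eq (Cardinal.aleph0_le_aleph _),
            Cardinal.add_one_eq (Cardinal.aleph0_le_aleph _)]
  · rw [← mk_B]
    exact Cardinal.mk_le_of_injective el_inj

def Cn (n : ℕ) : Set ↥LS := Set.range (fun a : O n => el ⟨n, a⟩)

lemma isChain_Cn (n : ℕ) : IsChain (· ≤ ·) (Cn n) := by
  rintro _ ⟨a, rfl⟩ _ ⟨b, rfl⟩ -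
  rcases le_total a b with h | h
  · exact Or.inl (le_def.2 (D_subset_D.2 h))
  · exact Or.inr (le_def.2 (D_subset_D.2 h))

lemma mk_Cn (n : ℕ) : #(Cn n) = Cardinal.aleph n := by
  have := Cardinal.mk_range_eq (fun a : O n => el ⟨n, a⟩)
    (fun a b h => sigma_snd (D_inj (congrArg Subtype.val h)))
  rw [Cn, this]
  exact mk_O n

lemma chain_bound (C : Set ↥LS) (hC : IsChain (· ≤ ·) C) :
    Cardinal.mk C < Cardinal.aleph Ordinal.omega0 := by
  classical
  by_cases h : ∃ x ∈ C, ∃ p : B, x.val = D p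
  · obtain ⟨x, hxC, ⟨n, a⟩, hx⟩ := h
    have hsub : C ⊆ Set.range (fun z : Option (Option (O n)) =>
        z.elim (⟨∅, empty_mem⟩ : ↥LS) (fun y => y.elim ⟨Set.univ, univ_mem⟩ (fun b => el ⟨n, b⟩))) := by
      intro y hyC
      rcases y.2 with hy | hy | ⟨⟨m, b⟩, hy⟩
      · exact ⟨none, Subtype.ext hy.symm⟩
      · exact ⟨some none, Subtype.ext hy.symm⟩
      · have hm : m = n := by
          rcases eq_or_ne y x with rfl | hne
          · have : D (⟨m, b⟩ : B) = D ⟨n, a⟩ := by rw [← hy, ← hx]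
            exact congrArg Sigma.fst (D_inj this)
          · rcases hC hyC hxC hne with hle | hle
            · have : D (⟨m, b⟩ : B) ⊆ D ⟨n, a⟩ := by
                rw [← hy, ← hx]; exact le_def.1 hle
              exact fst_eq_of_mem (this (self_mem_D _))
            · have : D (⟨n, a⟩ : B) ⊆ D ⟨m, b⟩ := by
                rw [← hy, ← hx]; exact le_def.1 hle
              exact (fst_eq_of_mem (this (self_mem_D _))).symm
        subst hm
        exact ⟨some (some b), Subtype.ext hy.symm⟩
    calc #C ≤ #(↥(Set.range _)) := Cardinal.mk_le_mk_of_subset hsub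
      _ ≤ #(Option (Option (O n))) := Cardinal.mk_range_le
      _ = Cardinal.aleph n := by
          rw [Cardinal.mk_option, Cardinal.mk_option, mk_O,
            Cardinal.add_one_eq (Cardinal.aleph0_le_aleph _),
            Cardinal.add_one_eq (Cardinal.aleph0_le_aleph _)]
      _ < Cardinal.aleph Ordinal.omega0 := Cardinal.aleph_lt_aleph.2 (Ordinal.nat_lt_omega0 n)
  · push_neg at h
    have hsub : C ⊆ Set.range (fun z : Bool =>
        if z then (⟨Set.univ, univ_mem⟩ : ↥LS) else ⟨∅, empty_mem⟩) := by
      intro y hyC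
      rcases y.2 with hy | hy | ⟨p, hy⟩
      · exact ⟨false, Subtype.ext hy.symm⟩
      · exact ⟨true, Subtype.ext hy.symm⟩
      · exact absurd hy (h y hyC p)
    calc #C ≤ #(↥(Set.range _)) := Cardinal.mk_le_mk_of_subset hsub
      _ ≤ #Bool := Cardinal.mk_range_le
      _ < ℵ₀ := Cardinal.lt_aleph0_of_finite Bool
      _ ≤ Cardinal.aleph Ordinal.omega0 := Cardinal.aleph0_le_aleph _

instance : Nonempty B := ⟨⟨0, Classical.arbitrary (O 0)⟩⟩

open Classical in
noncomputable def code (x : ↥LS) : ℕ :=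
  if x.val = ∅ then 0
  else if x.val = Set.univ then 1
  else if h : ∃ p : B, x.val = D p then h.choose.1 + 2 else 0

lemma code_empty {x : ↥LS} (h : x.val = ∅) : code x = 0 := by
  simp [code, h]

lemma code_univ {x : ↥LS} (h : x.val = Set.univ) : code x = 1 := by
  have h1 : x.val ≠ ∅ := by
    rw [h]
    simp [Set.univ_eq_empty_iff]
  rw [code, if_neg h1, if_pos h]

lemma code_D {x : ↥LS} {p : B} (h : x.val = D p) : code x = p.1 + 2 := by
  have h1 : x.val ≠ ∅ := by rw [h]; exact D_ne_empty p
  have h2 : x.val ≠ Set.univ := by rw [h]; exact D_ne_univ p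
  have hex : ∃ q : B, x.val = D q := ⟨p, h⟩
  have hch : hex.choose = p := D_inj (hex.choose_spec.symm.trans h)
  rw [code, if_neg h1, if_neg h2, dif_pos hex, hch]

lemma antichain_countable (A : Set ↥LS) (hA : IsAntichain (· ≤ ·) A) : A.Countable := by
  rw [Set.countable_iff_exists_injOn]
  refine ⟨code, ?_⟩
  intro x hx y hy hxy
  have hcase : ∀ z : ↥LS, z.val = ∅ ∨ z.val = Set.univ ∨ ∃ p : B, z.val = D p := fun z => z.2
  rcases hcase x with hx1 | hx1 | ⟨px, hx1⟩ <;> rcases hcase y with hy1 | hy1 | ⟨py, hy1⟩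
  · exact Subtype.ext (hx1.trans hy1.symm)
  · rw [code_empty hx1, code_univ hy1] at hxy; omega
  · rw [code_empty hx1, code_D hy1] at hxy; omega
  · rw [code_univ hx1, code_empty hy1] at hxy; omega
  · exact Subtype.ext (hx1.trans hy1.symm)
  · rw [code_univ hx1, code_D hy1] at hxy; omega
  · rw [code_D hx1, code_empty hy1] at hxy; omega
  · rw [code_D hx1, code_univ hy1] at hxy; omega
  · rw [code_D hx1, code_D hy1] at hxy
    obtain ⟨n, a⟩ := px
    obtain ⟨m, b⟩ := py
    have hnm : n = m := by dsimp only at hxy; omega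
    subst hnm
    by_contra hne
    rcases le_total a b with hab | hab
    · exact hA hx hy hne (le_def.2 (by rw [hx1, hy1]; exact D_subset_D.2 hab))
    · exact hA hy hx (Ne.symm hne) (le_def.2 (by rw [hx1, hy1]; exact D_subset_D.2 hab))

/-! ### Monotone self-maps -/

def eIso (n : ℕ) : Set.Iio ((Cardinal.aleph n).ord) ≃o O n := Ordinal.ToType.mk

def ordOf {n : ℕ} (a : O n) : Ordinal := ((eIso n).symm a).val

lemma ordOf_lt {n : ℕ} (a : O n) : ordOf a < (Cardinal.aleph n).ord := ((eIso n).symm a).2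

lemma bound {n : ℕ} {o : Ordinal} (h : o < (Cardinal.aleph n).ord) {i : Ordinal} (hi : i ≤ 1) :
    2 * o + i < (Cardinal.aleph n).ord := by
  rw [Cardinal.lt_ord] at h ⊢
  have hcard : (2 * o + i).card ≤ 2 * o.card + 1 := by
    rw [Ordinal.card_add, Ordinal.card_mul]
    gcongr
    · simp
    · simpa using Ordinal.card_le_card hi
  refine lt_of_le_of_lt hcard ?_
  have h0 : ℵ₀ ≤ Cardinal.aleph n := Cardinal.aleph0_le_aleph _
  refine Cardinal.add_lt_of_lt h0 (Cardinal.mul_lt_of_lt h0 ?_ h) (Cardinal.one_lt_aleph0.trans_le h0)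
  exact (Cardinal.nat_lt_aleph0 2).trans_le h0

open Classical in
noncomputable def fmap (S : ∀ n, Set (O n)) (n : ℕ) (a : O n) : O n :=
  (eIso n) ⟨2 * ordOf a + (if a ∈ S n then 1 else 0),
    bound (ordOf_lt a) (by split <;> simp)⟩

open Classical in
lemma symm_fmap (S : ∀ n, Set (O n)) (n : ℕ) (a : O n) :
    (eIso n).symm (fmap S n a) = ⟨2 * ordOf a + (if a ∈ S n then 1 else 0),
      bound (ordOf_lt a) (by split <;> simp)⟩ :=
  (eIso n).symm_apply_apply _

lemma le_fmap (S : ∀ n, Set (O n)) (n : ℕ) (a : O n) : a ≤ fmap S n a := by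
  refine ((eIso n).symm.le_iff_le).mp ?_
  rw [symm_fmap]
  refine Subtype.mk_le_mk.2 ?_
  calc ordOf a = 1 * ordOf a := (one_mul _).symm
    _ ≤ 2 * ordOf a := mul_le_mul_left one_le_two _
    _ ≤ 2 * ordOf a + _ := le_self_add

lemma fmap_mono (S : ∀ n, Set (O n)) (n : ℕ) {a b : O n} (hab : a ≤ b) :
    fmap S n a ≤ fmap S n b := by
  classical
  rcases hab.lt_or_eq with hlt | rfl
  · refine ((eIso n).symm.le_iff_le).mp ?_
    rw [symm_fmap, symm_fmap]
    refine Subtype.mk_le_mk.2 (le_of_lt ?_)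
    have h1 : ordOf a < ordOf b := by
      have := ((eIso n).symm.lt_iff_lt).2 hlt
      exact this
    have h2 : (1 : Ordinal) < 2 := by norm_num
    calc 2 * ordOf a + (if a ∈ S n then 1 else 0)
        ≤ 2 * ordOf a + 1 := add_le_add_right (by split <;> simp) _
      _ < 2 * ordOf a + 2 := add_lt_add_right h2 _
      _ = 2 * (ordOf a + 1) := by rw [mul_add, mul_one]
      _ ≤ 2 * ordOf b := mul_le_mul_right (Order.add_one_le_iff.2 h1) _
      _ ≤ 2 * ordOf b + (if b ∈ S n then 1 else 0) := le_self_add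
  · exact le_rfl

lemma fmap_inj {S S' : ∀ n, Set (O n)} {n : ℕ} {a : O n}
    (h : fmap S n a = fmap S' n a) : (a ∈ S n ↔ a ∈ S' n) := by
  classical
  have h2 := congrArg (fun z => ((eIso n).symm z).val) h
  simp only [symm_fmap] at h2
  have h3 := (add_right_inj (2 * ordOf a)).1 h2
  by_cases h4 : a ∈ S n <;> by_cases h5 : a ∈ S' n <;> simp [h4, h5] at h3 ⊢

noncomputable def gmap (S : ∀ n, Set (O n)) (p : B) : B := ⟨p.1, fmap S p.1 p.2⟩

noncomputable def Fm (S : ∀ n, Set (O n)) (X : Set B) : Set B := ⋃ q ∈ X, D (gmap S q)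

lemma Fm_mono (S : ∀ n, Set (O n)) : Monotone (Fm S) := fun _ _ h =>
  Set.biUnion_subset_biUnion_left h

lemma Fm_empty (S : ∀ n, Set (O n)) : Fm S ∅ = ∅ := by simp [Fm]

lemma Fm_univ (S : ∀ n, Set (O n)) : Fm S Set.univ = Set.univ := by
  refine Set.eq_univ_of_forall ?_
  rintro ⟨n, a⟩
  refine Set.mem_biUnion (Set.mem_univ (⟨n, a⟩ : B)) ?_
  exact mem_D_iff.2 (le_fmap S n a)

lemma Fm_D (S : ∀ n, Set (O n)) (n : ℕ) (a : O n) :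
    Fm S (D ⟨n, a⟩) = D ⟨n, fmap S n a⟩ := by
  apply subset_antisymm
  · refine Set.iUnion₂_subset ?_
    rintro q hq
    obtain ⟨c, hc, rfl⟩ := hq
    exact D_subset_D.2 (fmap_mono S n (Set.mem_Iic.1 hc))
  · have := Set.subset_biUnion_of_mem (u := fun q => D (gmap S q)) (self_mem_D (⟨n, a⟩ : B))
    exact this

lemma Fm_mem (S : ∀ n, Set (O n)) {X : Set B} (hX : X ∈ LS) : Fm S X ∈ LS := by
  rcases hX with rfl | rfl | ⟨⟨n, a⟩, rfl⟩
  · rw [Fm_empty]; exact empty_mem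
  · rw [Fm_univ]; exact univ_mem
  · rw [Fm_D]; exact D_mem _

noncomputable def Phi (S : ∀ n, Set (O n)) : ↥LS → ↥LS :=
  fun x => ⟨Fm S x.val, Fm_mem S x.2⟩

lemma Phi_mono (S : ∀ n, Set (O n)) : Monotone (Phi S) :=
  fun _ _ h => le_def.2 (Fm_mono S (le_def.1 h))

lemma Phi_inj : Function.Injective
    (fun S => (⟨Phi S, Phi_mono S⟩ : {f : ↥LS → ↥LS // Monotone f})) := by
  intro S S' h
  have h1 : Phi S = Phi S' := congrArg Subtype.val h
  funext n
  ext a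
  have h2 := congrArg Subtype.val (congrFun h1 (el ⟨n, a⟩))
  simp only [Phi, el] at h2
  rw [Fm_D, Fm_D] at h2
  exact fmap_inj (sigma_snd (D_inj h2))

lemma mk_monotone :
    #{f : ↥LS → ↥LS // Monotone f} = 2 ^ Cardinal.aleph Ordinal.omega0 := by
  apply le_antisymm
  · calc #{f : ↥LS → ↥LS // Monotone f} ≤ #(↥LS → ↥LS) := Cardinal.mk_subtype_le _
      _ = #(↥LS) ^ #(↥LS) := (Cardinal.power_def _ _).symm
      _ = 2 ^ Cardinal.aleph Ordinal.omega0 := by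
          rw [mk_L]
          exact Cardinal.power_self_eq (Cardinal.aleph0_le_aleph _)
  · have hle := Cardinal.mk_le_of_injective Phi_inj
    refine le_trans (le_of_eq ?_) hle
    rw [Cardinal.mk_pi]
    have : ∀ n : ℕ, #(Set (O n)) = (2 : Cardinal.{0}) ^ Cardinal.aleph n := by
      intro n
      rw [Cardinal.mk_set, mk_O]
    simp only [this]
    rw [← Cardinal.power_sum, sum_aleph]

end

end AlephOmegaLattice

/-- There is a complete (bounded) lattice `L` of cardinality `ℵ_ω` which contains chains of
cardinality `ℵ_n` for each `n`, but all of whose chains have cardinality `< ℵ_ω` and all of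
whose antichains are at most countable, and which admits `2^{ℵ_ω}` many monotone
functions `L → L`. -/
theorem exists_lattice_aleph_omega_chains :
    ∃ (L : Type) (_ : CompleteLattice L),
      Cardinal.mk L = Cardinal.aleph Ordinal.omega0 ∧
      (∀ n : ℕ, ∃ C : Set L, IsChain (· ≤ ·) C ∧ Cardinal.mk C = Cardinal.aleph n) ∧
      (∀ C : Set L, IsChain (· ≤ ·) C → Cardinal.mk C < Cardinal.aleph Ordinal.omega0) ∧
      (∀ A : Set L, IsAntichain (· ≤ ·) A → A.Countable) ∧
      Cardinal.mk {f : L → L // Monotone f} = 2 ^ Cardinal.aleph Ordinal.omega0 := by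
  exact ⟨↥AlephOmegaLattice.LS, AlephOmegaLattice.instL, AlephOmegaLattice.mk_L,
    fun n => ⟨AlephOmegaLattice.Cn n, AlephOmegaLattice.isChain_Cn n, AlephOmegaLattice.mk_Cn n⟩,
    AlephOmegaLattice.chain_bound, AlephOmegaLattice.antichain_countable,
    AlephOmegaLattice.mk_monotone⟩
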